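/- arXiv:2601.09375 — 2 statements merged into one kernel-verified Lean document; each statement's English description precedes it below -/
import Mathlib

section
/- Let $u$ be a nonconstant inner function and $\varphi \in L^\infty(\mathbb{T})$ with $|\varphi| = 1$ a.e. on $\mathbb{T}$. Suppose $f = x \oplus y \in \mathcal{K}_u^\perp$ with $x \in uH^2$, $y \in H^2_-$ is a nonzero extremal vector for $D_\varphi$, i.e. $\|D_\varphi f\| = \|f\|$. Define $F(t) = \|D_\varphi(tx + y)\|^2 - \|tx + y\|^2$ for $t \in \mathbb{R}$. Then $F(t) = \alpha t^2 + 2\beta t + \gamma$ with $\alpha = \|D_\varphi x\|^2 - \|x\|^2 \leq 0$, $\beta = \mathrm{Re}\langle D_\varphi x, D_\varphi y\rangle$, $\gamma = \|D_\varphi y\|^2 - \|y\|^2$, and moreover $\beta = -\alpha$, $\gamma = \alpha$, so that $F(t) = \alpha(t-1)^2$. -/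
set_option synthInstance.maxHeartbeats 1000000
set_option maxHeartbeats 1000000

open MeasureTheory Complex Submodule

noncomputable section
namespace DTTO

instance fact2pi : Fact (0 < 2 * Real.pi) := ⟨by positivity⟩

/-- The unit circle, realized as `ℝ / 2πℤ`. -/
abbrev 𝕋 : Type := AddCircle (2 * Real.pi)

/-- Normalized Haar (arc-length) measure on the circle. -/
abbrev μ : Measure 𝕋 := AddCircle.haarAddCircle

/-- The Hilbert space `L²(𝕋)`. -/
abbrev L2 : Type := Lp ℂ 2 μ

/-- The Hardy space `H²`: the closed span in `L²` of the Fourier monomials `e^{int}`, `n ≥ 0`. -/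
def H2 : Submodule ℂ L2 :=
  (span ℂ (Set.range fun n : ℕ => fourierLp 2 (n : ℤ))).topologicalClosure

instance : CompleteSpace H2 :=
  (Submodule.isClosed_topologicalClosure _).isComplete.completeSpace_coe

/-- A boundary function is inner iff it is unimodular a.e. and its `L²` class lies in `H²`. -/
def IsInner (w : 𝕋 → ℂ) : Prop :=
  ∃ hw : MemLp w 2 μ, hw.toLp w ∈ H2 ∧ ∀ᵐ x ∂μ, ‖w x‖ = 1

/-- `w` is a nonconstant function (up to null sets). -/
def Nonconst (w : 𝕋 → ℂ) : Prop := ¬ ∃ c : ℂ, w =ᵐ[μ] fun _ => c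

/-- `M` is the operator of multiplication by `φ` on `L²`. -/
def IsMul (φ : 𝕋 → ℂ) (M : L2 →L[ℂ] L2) : Prop :=
  ∀ f : L2, (M f : 𝕋 → ℂ) =ᵐ[μ] fun x => φ x * f x

/-- The subspace `u·H²` (where `Mu` is multiplication by `u`). -/
def uH2 (Mu : L2 →L[ℂ] L2) : Submodule ℂ L2 := H2.map (Mu : L2 →ₗ[ℂ] L2)

/-- The model space `K_u = H² ⊖ uH²`. -/
def Ku (Mu : L2 →L[ℂ] L2) : Submodule ℂ L2 := H2 ⊓ (uH2 Mu)ᗮ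

instance (Mu : L2 →L[ℂ] L2) : CompleteSpace (Ku Mu) :=
  IsComplete.completeSpace_coe (IsClosed.isComplete (by
    have : (↑(Ku Mu) : Set L2) = ↑H2 ∩ ↑(uH2 Mu)ᗮ := rfl
    rw [this]
    exact (Submodule.isClosed_topologicalClosure _).inter (Submodule.isClosed_orthogonal _)))

/-- The dual truncated Toeplitz operator `D_φ = P_{K_u^⊥} M_φ |_{K_u^⊥}` as an operator
on `K_u^⊥`. -/
def Dphi (Mu Mphi : L2 →L[ℂ] L2) : ((Ku Mu)ᗮ : Submodule ℂ L2) →L[ℂ] ((Ku Mu)ᗮ : Submodule ℂ L2) :=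
  (orthogonalProjection (Ku Mu)ᗮ).comp (Mphi.comp (Ku Mu)ᗮ.subtypeL)

/-- The composition `P_{K_u^⊥} ∘ M_φ`, viewed as a map of `L²` (agreeing with `D_φ` on
`K_u^⊥`). -/
def DP (Mu Mphi : L2 →L[ℂ] L2) (v : L2) : L2 :=
  ↑(orthogonalProjection (Ku Mu)ᗮ (Mphi v))

/-- An operator is norm attaining if some nonzero vector realizes its operator norm. -/
def NormAttaining {E F : Type*} [NormedAddCommGroup E] [NormedAddCommGroup F]
    [NormedSpace ℂ E] [NormedSpace ℂ F] (T : E →L[ℂ] F) : Prop :=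
  ∃ x, x ≠ 0 ∧ ‖T x‖ = ‖T‖ * ‖x‖

lemma fourier_mem_top (n : ℤ) : MemLp (fun x : 𝕋 => fourier n x) ⊤ μ :=
  memLp_top_of_bound ((map_continuous (fourier n)).aestronglyMeasurable) 1
    (Filter.Eventually.of_forall fun x => le_of_eq (Circle.norm_coe _))

lemma memMul (n : ℤ) (f : L2) : MemLp (fun x : 𝕋 => fourier n x * f x) 2 μ := by
  have h := MemLp.smul (r := 2) (fourier_mem_top n) (Lp.memLp f)
  have e : (fun x : 𝕋 => fourier n x * f x) = ((f : 𝕋 → ℂ) • fun x : 𝕋 => fourier n x) := by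
    funext x; simp [Pi.smul_apply, smul_eq_mul, mul_comm]
  rw [e]; exact h

def mulFL (n : ℤ) (f : L2) : L2 := (memMul n f).toLp _

lemma coeFn_mulFL (n : ℤ) (f : L2) :
    (mulFL n f : 𝕋 → ℂ) =ᵐ[μ] fun x => fourier n x * f x := MemLp.coeFn_toLp _

lemma norm_eq_of_unimodular (ψ : 𝕋 → ℂ) (hψ : ∀ᵐ x ∂μ, ‖ψ x‖ = 1) (f g : L2)
    (hg : (g : 𝕋 → ℂ) =ᵐ[μ] fun x => ψ x * f x) : ‖g‖ = ‖f‖ := by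
  rw [Lp.norm_def, Lp.norm_def, eLpNorm_congr_ae hg,
    eLpNorm_congr_norm_ae (g := (f : 𝕋 → ℂ)) ?_]
  filter_upwards [hψ] with x hx
  rw [norm_mul, hx, one_mul]

lemma norm_mulFL (n : ℤ) (f : L2) : ‖mulFL n f‖ = ‖f‖ :=
  norm_eq_of_unimodular (fun x => fourier n x)
    (Filter.Eventually.of_forall fun x => Circle.norm_coe _) f _ (coeFn_mulFL n f)

def mulF (n : ℤ) : L2 →L[ℂ] L2 :=
  LinearMap.mkContinuous
    { toFun := mulFL n
      map_add' := fun f g => by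
        apply Lp.ext
        filter_upwards [coeFn_mulFL n (f + g), coeFn_mulFL n f, coeFn_mulFL n g,
          Lp.coeFn_add f g, Lp.coeFn_add (mulFL n f) (mulFL n g)] with x h1 h2 h3 h4 h5
        rw [h1, h5, Pi.add_apply, h2, h3, h4, Pi.add_apply, mul_add]
      map_smul' := fun c f => by
        apply Lp.ext
        filter_upwards [coeFn_mulFL n (c • f), coeFn_mulFL n f,
          Lp.coeFn_smul c f, Lp.coeFn_smul c (mulFL n f)] with x h1 h2 h3 h4
        simp [h1, h2, h3, h4, Pi.smul_apply, smul_eq_mul]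
        ring }
    1 (fun f => by simp [norm_mulFL])

lemma mulF_fourierLp (n m : ℤ) : mulF n (fourierLp 2 m) = fourierLp 2 (n + m) := by
  apply Lp.ext
  have h1 : (mulF n (fourierLp 2 m) : 𝕋 → ℂ) =ᵐ[μ] fun x => fourier n x * (fourierLp 2 m : 𝕋 → ℂ) x :=
    coeFn_mulFL n (fourierLp 2 m)
  filter_upwards [h1, coeFn_fourierLp 2 m, coeFn_fourierLp 2 (n + m)] with x h1 h2 h3
  rw [h1, h2, h3, fourier_add]

lemma maps_H2 (T : L2 →L[ℂ] L2) (h : ∀ n : ℕ, T (fourierLp 2 (n : ℤ)) ∈ H2) :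
    ∀ f ∈ H2, T f ∈ H2 := by
  intro f hf
  have hle : H2 ≤ Submodule.comap (T : L2 →ₗ[ℂ] L2) H2 := by
    apply Submodule.topologicalClosure_minimal
    · rw [Submodule.span_le]; rintro _ ⟨n, rfl⟩; exact h n
    · exact IsClosed.preimage T.continuous (Submodule.isClosed_topologicalClosure _)
  exact hle hf

lemma mulF_mem_H2 (n : ℕ) {f : L2} (hf : f ∈ H2) : mulF (n : ℤ) f ∈ H2 := by
  refine maps_H2 _ (fun m => ?_) f hf
  rw [mulF_fourierLp]
  apply Submodule.le_topologicalClosure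
  apply Submodule.subset_span
  exact ⟨n + m, by push_cast; ring_nf⟩


lemma mulF_apply (n : ℤ) (f : L2) : mulF n f = mulFL n f := rfl

lemma Mu_maps (u : 𝕋 → ℂ) (hu : IsInner u) (Mu : L2 →L[ℂ] L2) (hMu : IsMul u Mu) :
    ∀ f ∈ H2, Mu f ∈ H2 := by
  obtain ⟨hw, huH2, -⟩ := hu
  refine maps_H2 Mu (fun n => ?_)
  have he : Mu (fourierLp 2 (n : ℤ)) = mulF (n : ℤ) (hw.toLp u) := by
    apply Lp.ext
    rw [mulF_apply]
    filter_upwards [hMu (fourierLp 2 (n : ℤ)), coeFn_fourierLp 2 (n : ℤ),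
      coeFn_mulFL (n : ℤ) (hw.toLp u), hw.coeFn_toLp] with x h1 h2 h3 h4
    rw [h1, h3, h4]
    simp only [h2]
    ring
  rw [he]
  exact mulF_mem_H2 n huH2

lemma uH2_le_H2 (u : 𝕋 → ℂ) (hu : IsInner u) (Mu : L2 →L[ℂ] L2) (hMu : IsMul u Mu) :
    uH2 Mu ≤ H2 := by
  rintro _ ⟨f, hf, rfl⟩
  exact Mu_maps u hu Mu hMu f hf

lemma DP_add (Mu Mφ : L2 →L[ℂ] L2) (v w : L2) :
    DP Mu Mφ (v + w) = DP Mu Mφ v + DP Mu Mφ w := by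
  simp [DP, map_add]

lemma DP_smul (Mu Mφ : L2 →L[ℂ] L2) (c : ℂ) (v : L2) :
    DP Mu Mφ (c • v) = c • DP Mu Mφ v := by
  simp [DP, _root_.map_smul]

lemma DP_norm_le (u φ : 𝕋 → ℂ) (Mu Mφ : L2 →L[ℂ] L2) (hMφ : IsMul φ Mφ)
    (hφuni : ∀ᵐ x ∂μ, ‖φ x‖ = 1) (v : L2) : ‖DP Mu Mφ v‖ ≤ ‖v‖ := by
  have h1 : ‖Mφ v‖ = ‖v‖ := norm_eq_of_unimodular φ hφuni v (Mφ v) (hMφ v)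
  have h2 : ‖DP Mu Mφ v‖ = ‖orthogonalProjection (Ku Mu)ᗮ (Mφ v)‖ := rfl
  rw [h2, ← h1]
  calc ‖orthogonalProjection (Ku Mu)ᗮ (Mφ v)‖
      ≤ ‖orthogonalProjection (Ku Mu)ᗮ‖ * ‖Mφ v‖ :=
        (orthogonalProjection (Ku Mu)ᗮ).le_opNorm (Mφ v)
    _ ≤ 1 * ‖Mφ v‖ :=
        mul_le_mul_of_nonneg_right (orthogonalProjection_norm_le _) (norm_nonneg _)
    _ = ‖Mφ v‖ := one_mul _

lemma norm_tsmul_add_sq (v w : L2) (t : ℝ) :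
    ‖(t : ℂ) • v + w‖ ^ 2 = t ^ 2 * ‖v‖ ^ 2 + 2 * t * (inner ℂ v w : ℂ).re + ‖w‖ ^ 2 := by
  rw [@norm_add_sq ℂ, inner_smul_left, norm_smul]
  simp only [Complex.conj_ofReal, Complex.norm_real, Real.norm_eq_abs, mul_pow, sq_abs,
    RCLike.re_to_complex, Complex.re_ofReal_mul]
  ring

/-- Quadratic extremality identities for `D_φ`: if `f = x ⊕ y` (with `x ∈ uH²`,
`y ∈ H²₋`) is a nonzero extremal vector for `D_φ`, then
`F(t) = ‖D_φ(tx+y)‖² − ‖tx+y‖²` equals `αt² + 2βt + γ` with `α ≤ 0`, `β = −α`, `γ = α`,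
so that `F(t) = α(t−1)²`. -/
theorem stmt12 (u φ : 𝕋 → ℂ) (hu : IsInner u) (hnc : Nonconst u)
    (Mu Mφ : L2 →L[ℂ] L2) (hMu : IsMul u Mu) (hMφ : IsMul φ Mφ)
    (hφuni : ∀ᵐ x ∂μ, ‖φ x‖ = 1)
    (x y : L2) (hx : x ∈ uH2 Mu) (hy : y ∈ H2ᗮ) (hne : x + y ≠ 0)
    (hext : ‖DP Mu Mφ (x + y)‖ = ‖x + y‖) :
    ‖DP Mu Mφ x‖ ^ 2 - ‖x‖ ^ 2 ≤ 0 ∧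
    (inner ℂ (DP Mu Mφ x) (DP Mu Mφ y) : ℂ).re = -(‖DP Mu Mφ x‖ ^ 2 - ‖x‖ ^ 2) ∧
    ‖DP Mu Mφ y‖ ^ 2 - ‖y‖ ^ 2 = ‖DP Mu Mφ x‖ ^ 2 - ‖x‖ ^ 2 ∧
    (∀ t : ℝ, ‖DP Mu Mφ ((t : ℂ) • x + y)‖ ^ 2 - ‖(t : ℂ) • x + y‖ ^ 2
      = (‖DP Mu Mφ x‖ ^ 2 - ‖x‖ ^ 2) * t ^ 2
        + 2 * (inner ℂ (DP Mu Mφ x) (DP Mu Mφ y) : ℂ).re * t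
        + (‖DP Mu Mφ y‖ ^ 2 - ‖y‖ ^ 2)) ∧
    (∀ t : ℝ, ‖DP Mu Mφ ((t : ℂ) • x + y)‖ ^ 2 - ‖(t : ℂ) • x + y‖ ^ 2
      = (‖DP Mu Mφ x‖ ^ 2 - ‖x‖ ^ 2) * (t - 1) ^ 2) := by
  classical
  have hxH2 : x ∈ H2 := uH2_le_H2 u hu Mu hMu hx
  have hxy : (inner ℂ x y : ℂ) = 0 := (H2.mem_orthogonal y).mp hy x hxH2
  set A := ‖DP Mu Mφ x‖ ^ 2 - ‖x‖ ^ 2 with hA_def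
  set B := (inner ℂ (DP Mu Mφ x) (DP Mu Mφ y) : ℂ).re with hB_def
  set G := ‖DP Mu Mφ y‖ ^ 2 - ‖y‖ ^ 2 with hG_def
  have hDlin : ∀ t : ℝ, DP Mu Mφ ((t : ℂ) • x + y) = (t : ℂ) • DP Mu Mφ x + DP Mu Mφ y := by
    intro t; rw [DP_add, DP_smul]
  have Feq : ∀ t : ℝ, ‖DP Mu Mφ ((t : ℂ) • x + y)‖ ^ 2 - ‖(t : ℂ) • x + y‖ ^ 2
      = A * t ^ 2 + 2 * B * t + G := by
    intro t
    rw [hDlin t, norm_tsmul_add_sq, norm_tsmul_add_sq, hxy]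
    simp only [hA_def, hB_def, hG_def, Complex.zero_re]
    ring
  have hAle : A ≤ 0 := by
    have h := DP_norm_le u φ Mu Mφ hMφ hφuni x
    have h2 : ‖DP Mu Mφ x‖ ^ 2 ≤ ‖x‖ ^ 2 := pow_le_pow_left₀ (norm_nonneg _) h 2
    simp only [hA_def]; linarith
  have hle : ∀ t : ℝ, A * t ^ 2 + 2 * B * t + G ≤ 0 := by
    intro t
    rw [← Feq t]
    have h := DP_norm_le u φ Mu Mφ hMφ hφuni ((t : ℂ) • x + y)
    have h2 := pow_le_pow_left₀ (norm_nonneg _) h 2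
    linarith
  have h1 : A + 2 * B + G = 0 := by
    have h := Feq 1
    rw [Complex.ofReal_one, one_smul, hext] at h
    simp only [one_pow, mul_one] at h
    linarith
  have hd : (0:ℝ) < 1 - A := by linarith
  have hcs : (2 * A + 2 * B) * ((2 * A + 2 * B) / (1 - A))
      = ((2 * A + 2 * B) / (1 - A)) ^ 2 * (1 - A) := by
    field_simp
  have hkey := hle (1 + (2 * A + 2 * B) / (1 - A))
  have hs0 : ((2 * A + 2 * B) / (1 - A)) ^ 2 ≤ 0 := by nlinarith [hkey, h1, hcs]
  have hsz : (2 * A + 2 * B) / (1 - A) = 0 := by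
    nlinarith [sq_nonneg ((2 * A + 2 * B) / (1 - A))]
  have hc0 : 2 * A + 2 * B = 0 := by
    rcases div_eq_zero_iff.mp hsz with h | h
    · exact h
    · linarith
  have hB : B = -A := by linarith
  have hG : G = A := by linarith
  refine ⟨hAle, hB, hG, Feq, fun t => ?_⟩
  rw [Feq t, hB, hG]
  ring
end DTTO
end
end

section
/- Let $P$ be an orthogonal projection on a complex Hilbert space $H$, let $a, b \in H$ with $a \perp b$, and suppose $\|P(a+b)\| = \|a+b\|$. Define $F(t) = \|P(ta+b)\|^2 - \|ta+b\|^2$. Then $F(t) = (\|Pa\|^2 - \|a\|^2)(t-1)^2 \le 0$ for all real $t$; in particular $\mathrm{Re}\langle Pa, Pb\rangle = \|a\|^2 - \|Pa\|^2$ and $\|Pb\|^2 - \|b\|^2 = \|Pa\|^2 - \|a\|^2$. -/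
noncomputable section

theorem expand {H : Type*} [NormedAddCommGroup H] [InnerProductSpace ℂ H]
    (t : ℝ) (x y : H) :
    ‖(t : ℂ) • x + y‖ ^ 2 = t ^ 2 * ‖x‖ ^ 2 + 2 * t * (inner ℂ x y : ℂ).re + ‖y‖ ^ 2 := by
  rw [@norm_add_sq ℂ, inner_smul_left, norm_smul]
  simp [Complex.norm_real]
  rw [mul_pow, sq_abs]
  ring

theorem contraction {H : Type*} [NormedAddCommGroup H] [InnerProductSpace ℂ H]
    (P : H →L[ℂ] H) (hidem : P * P = P)
    (hsa : ∀ v w : H, (inner ℂ (P v) w : ℂ) = inner ℂ v (P w)) (v : H) :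
    ‖P v‖ ≤ ‖v‖ := by
  have hPP : P (P v) = P v := by
    conv_rhs => rw [← hidem]
    rfl
  have h1 : (‖P v‖ : ℝ) ^ 2 = ‖(inner ℂ v (P v) : ℂ)‖ := by
    have : (inner ℂ (P v) (P v) : ℂ) = inner ℂ v (P v) := by
      rw [hsa, hPP]
    rw [← this, inner_self_eq_norm_sq_to_K]
    simp [Complex.norm_real]
  have h2 : ‖(inner ℂ v (P v) : ℂ)‖ ≤ ‖v‖ * ‖P v‖ := norm_inner_le_norm v (P v)
  rcases eq_or_lt_of_le (norm_nonneg (P v)) with h | h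
  · rw [← h]; exact norm_nonneg v
  · nlinarith

/-- Quadratic extremality identity for an orthogonal projection P: if a ⟂ b and
‖P(a+b)‖ = ‖a+b‖, then F(t) = ‖P(ta+b)‖² − ‖ta+b‖² collapses to (‖Pa‖²−‖a‖²)(t−1)² ≤ 0,
and the mixed-term identities hold. -/
theorem stmt13 {H : Type*} [NormedAddCommGroup H] [InnerProductSpace ℂ H]
    (P : H →L[ℂ] H) (hidem : P * P = P)
    (hsa : ∀ v w : H, (inner ℂ (P v) w : ℂ) = inner ℂ v (P w))
    (a b : H) (hab : (inner ℂ a b : ℂ) = 0)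
    (hext : ‖P (a + b)‖ = ‖a + b‖) :
    (∀ t : ℝ, ‖P ((t : ℂ) • a + b)‖ ^ 2 - ‖(t : ℂ) • a + b‖ ^ 2
        = (‖P a‖ ^ 2 - ‖a‖ ^ 2) * (t - 1) ^ 2) ∧
    (∀ t : ℝ, ‖P ((t : ℂ) • a + b)‖ ^ 2 - ‖(t : ℂ) • a + b‖ ^ 2 ≤ 0) ∧
    (inner ℂ (P a) (P b) : ℂ).re = ‖a‖ ^ 2 - ‖P a‖ ^ 2 ∧
    ‖P b‖ ^ 2 - ‖b‖ ^ 2 = ‖P a‖ ^ 2 - ‖a‖ ^ 2 := by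
  set A : ℝ := ‖P a‖ ^ 2 - ‖a‖ ^ 2 with hA
  set G : ℝ := (inner ℂ (P a) (P b) : ℂ).re with hG
  set B : ℝ := ‖P b‖ ^ 2 - ‖b‖ ^ 2 with hB
  -- the quadratic form of F
  have hF : ∀ t : ℝ, ‖P ((t : ℂ) • a + b)‖ ^ 2 - ‖(t : ℂ) • a + b‖ ^ 2
      = A * t ^ 2 + 2 * G * t + B := by
    intro t
    have hmap : P ((t : ℂ) • a + b) = (t : ℂ) • P a + P b := by
      rw [map_add, map_smul]
    rw [hmap, expand, expand, hab]
    simp [hA, hG, hB]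
    ring
  -- nonpositivity
  have hle : ∀ t : ℝ, ‖P ((t : ℂ) • a + b)‖ ^ 2 - ‖(t : ℂ) • a + b‖ ^ 2 ≤ 0 := by
    intro t
    have h := contraction P hidem hsa ((t : ℂ) • a + b)
    nlinarith [norm_nonneg (P ((t : ℂ) • a + b)), norm_nonneg ((t : ℂ) • a + b)]
  have hAle : A ≤ 0 := by
    have h := contraction P hidem hsa a
    nlinarith [norm_nonneg (P a), norm_nonneg a]
  -- F(1) = 0
  have h1 : A + 2 * G + B = 0 := by
    have := hF 1
    have hone : ((1 : ℝ) : ℂ) • a + b = a + b := by simp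
    rw [hone] at this
    rw [hext] at this
    nlinarith [this]
  -- quadratic ≤ 0 everywhere
  have hq : ∀ t : ℝ, A * t ^ 2 + 2 * G * t + B ≤ 0 := fun t => (hF t) ▸ hle t
  -- key: G = -A
  have hc : G = -A := by
    rcases eq_or_lt_of_le hAle with h0 | h0
    · -- A = 0
      have e1 := hq 2
      have e2 := hq 0
      nlinarith [h1, e1, e2]
    · have hAne : A ≠ 0 := ne_of_lt h0
      set s : ℝ := -(A + G) / A with hs
      have hAs : A * s = -(A + G) := by
        rw [hs]; field_simp
      have hq1 := hq (1 + s)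
      have e1 : A * s ^ 2 + 2 * (A + G) * s ≤ 0 := by nlinarith [hq1, h1]
      have e2 : A * s ^ 2 = -(A + G) * s := by
        calc A * s ^ 2 = (A * s) * s := by ring
        _ = -(A + G) * s := by rw [hAs]
      have e3 : (A + G) * s ≤ 0 := by nlinarith [e1, e2]
      have e4 : A * ((A + G) * s) = -(A + G) ^ 2 := by
        calc A * ((A + G) * s) = (A * s) * (A + G) := by ring
        _ = -(A + G) * (A + G) := by rw [hAs]
        _ = -(A + G) ^ 2 := by ring
      have e5 : 0 ≤ A * ((A + G) * s) := mul_nonneg_of_nonpos_of_nonpos h0.le e3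
      nlinarith [e4, e5, sq_nonneg (A + G)]
  have hBA : B = A := by linarith [h1, hc]
  refine ⟨fun t => ?_, hle, by linarith [hc], hBA⟩
  rw [hF t, hBA, hc]
  ring
end
end
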